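/- Every finite graph with N ≥ 1 vertices and maximum degree at most 4 admits a VIED embedding into the three-dimensional grid graph Grid_{4N × (2N+2) × 2}. -/

import Mathlib

open SimpleGraph


/-- A vertex-isolated edge-disjoint (VIED) embedding of a graph `G` into a graph `H`. -/
structure VIEDEmbedding {α β : Type*} (G : SimpleGraph α) (H : SimpleGraph β) where
  toFun : α → β
  inj : Function.Injective toFun
  path : ∀ ⦃v w : α⦄, G.Adj v w → H.Walk (toFun v) (toFun w)
  path_isPath : ∀ ⦃v w : α⦄ (h : G.Adj v w), (path h).IsPath
  path_symm : ∀ ⦃v w : α⦄ (h : G.Adj v w), path h.symm = (path h).reverse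
  interior_disjoint : ∀ ⦃v w v' w' : α⦄ (h : G.Adj v w) (h' : G.Adj v' w'),
    s(v, w) ≠ s(v', w') → ∀ x : β,
      x ∈ (path h).support.tail.dropLast → x ∉ (path h').support.tail.dropLast
  vertex_isolated : ∀ ⦃v w w' : α⦄ (h : G.Adj w w'), v ≠ w → v ≠ w' →
    ∀ x ∈ (path h).support, 2 ≤ H.dist (toFun v) x

/-- The grid graph on `∏ i, {1,…,m i}`: two tuples are adjacent iff they differ in
exactly one coordinate, and in that coordinate by exactly 1. -/
def gridGraph {d : ℕ} (m : Fin d → ℕ) : SimpleGraph (∀ i, Fin (m i)) :=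
  SimpleGraph.fromRel (fun x y =>
    ∃ j, ((x j : ℕ) + 1 = (y j : ℕ)) ∧ ∀ i, i ≠ j → x i = y i)

namespace VIED

variable {N : ℕ}

abbrev gdim (N : ℕ) : Fin 3 → ℕ := ![4 * N, 2 * N + 2, 2]
abbrev GP (N : ℕ) := ∀ i, Fin (gdim N i)
abbrev HG (N : ℕ) : SimpleGraph (GP N) := gridGraph (gdim N)

def i0 : Fin 3 := ⟨0, by omega⟩
def i1 : Fin 3 := ⟨1, by omega⟩
def i2 : Fin 3 := ⟨2, by omega⟩

def pt (hN : 0 < N) (a b c : ℕ) : GP N := fun i =>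
  match i with
  | ⟨0, _⟩ => (⟨a % (4 * N), Nat.mod_lt _ (by omega)⟩ : Fin (4 * N))
  | ⟨1, _⟩ => (⟨b % (2 * N + 2), Nat.mod_lt _ (by omega)⟩ : Fin (2 * N + 2))
  | ⟨2, _⟩ => (⟨c % 2, Nat.mod_lt _ (by omega)⟩ : Fin 2)

def X (x : GP N) : ℕ := (x i0 : ℕ)
def Y (x : GP N) : ℕ := (x i1 : ℕ)
def Z (x : GP N) : ℕ := (x i2 : ℕ)

lemma X_lt (x : GP N) : X x < 4 * N := (x i0).isLt
lemma Y_lt (x : GP N) : Y x < 2 * N + 2 := (x i1).isLt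
lemma Z_lt (x : GP N) : Z x < 2 := (x i2).isLt

@[simp] lemma X_pt (hN : 0 < N) {a b c : ℕ} (ha : a < 4 * N) : X (pt hN a b c) = a := by
  simp [X, pt, i0, Nat.mod_eq_of_lt ha]
@[simp] lemma Y_pt (hN : 0 < N) {a b c : ℕ} (hb : b < 2 * N + 2) : Y (pt hN a b c) = b := by
  simp [Y, pt, i1, Nat.mod_eq_of_lt hb]
@[simp] lemma Z_pt (hN : 0 < N) {a b c : ℕ} (hc : c < 2) : Z (pt hN a b c) = c := by
  simp [Z, pt, i2, Nat.mod_eq_of_lt hc]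

lemma GP.ext {x y : GP N} (h0 : X x = X y) (h1 : Y x = Y y) (h2 : Z x = Z y) : x = y := by
  funext i
  match i with
  | ⟨0, _⟩ => exact Fin.ext h0
  | ⟨1, _⟩ => exact Fin.ext h1
  | ⟨2, _⟩ => exact Fin.ext h2

lemma pt_eta (hN : 0 < N) (x : GP N) : pt hN (X x) (Y x) (Z x) = x :=
  GP.ext (X_pt hN (X_lt x)) (Y_pt hN (Y_lt x)) (Z_pt hN (Z_lt x))

lemma pt_inj (hN : 0 < N) {a b c a' b' c' : ℕ} (ha : a < 4 * N) (hb : b < 2 * N + 2) (hc : c < 2)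
    (ha' : a' < 4 * N) (hb' : b' < 2 * N + 2) (hc' : c' < 2) :
    pt hN a b c = pt hN a' b' c' ↔ a = a' ∧ b = b' ∧ c = c' := by
  constructor
  · intro h
    refine ⟨?_, ?_, ?_⟩
    · have := congrArg X h; rwa [X_pt hN ha, X_pt hN ha'] at this
    · have := congrArg Y h; rwa [Y_pt hN hb, Y_pt hN hb'] at this
    · have := congrArg Z h; rwa [Z_pt hN hc, Z_pt hN hc'] at this
  · rintro ⟨rfl, rfl, rfl⟩; rfl

lemma adj_coords {x y : GP N} (h : (HG N).Adj x y) :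
    (Nat.dist (X x) (X y) = 1 ∧ Y x = Y y ∧ Z x = Z y) ∨
    (X x = X y ∧ Nat.dist (Y x) (Y y) = 1 ∧ Z x = Z y) ∨
    (X x = X y ∧ Y x = Y y ∧ Nat.dist (Z x) (Z y) = 1) := by
  obtain ⟨-, h | h⟩ := (SimpleGraph.fromRel_adj _ x y).mp h <;> obtain ⟨j, hj, hother⟩ := h
  · match j with
    | ⟨0, _⟩ =>
      left
      have h1 := hother i1 (by simp [i1, Fin.ext_iff])
      have h2 := hother i2 (by simp [i2, Fin.ext_iff])
      refine ⟨?_, congrArg Fin.val h1, congrArg Fin.val h2⟩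
      have : X x + 1 = X y := hj
      simp [Nat.dist, this.symm]
    | ⟨1, _⟩ =>
      right; left
      have h1 := hother i0 (by simp [i0, Fin.ext_iff])
      have h2 := hother i2 (by simp [i2, Fin.ext_iff])
      refine ⟨congrArg Fin.val h1, ?_, congrArg Fin.val h2⟩
      have : Y x + 1 = Y y := hj
      simp [Nat.dist, this.symm]
    | ⟨2, _⟩ =>
      right; right
      have h1 := hother i0 (by simp [i0, Fin.ext_iff])
      have h2 := hother i1 (by simp [i1, Fin.ext_iff])
      refine ⟨congrArg Fin.val h1, congrArg Fin.val h2, ?_⟩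
      have : Z x + 1 = Z y := hj
      simp [Nat.dist, this.symm]
  · match j with
    | ⟨0, _⟩ =>
      left
      have h1 := hother i1 (by simp [i1, Fin.ext_iff])
      have h2 := hother i2 (by simp [i2, Fin.ext_iff])
      refine ⟨?_, (congrArg Fin.val h1).symm, (congrArg Fin.val h2).symm⟩
      have : X y + 1 = X x := hj
      simp [Nat.dist, this.symm]
    | ⟨1, _⟩ =>
      right; left
      have h1 := hother i0 (by simp [i0, Fin.ext_iff])
      have h2 := hother i2 (by simp [i2, Fin.ext_iff])
      refine ⟨(congrArg Fin.val h1).symm, ?_, (congrArg Fin.val h2).symm⟩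
      have : Y y + 1 = Y x := hj
      simp [Nat.dist, this.symm]
    | ⟨2, _⟩ =>
      right; right
      have h1 := hother i0 (by simp [i0, Fin.ext_iff])
      have h2 := hother i1 (by simp [i1, Fin.ext_iff])
      refine ⟨(congrArg Fin.val h1).symm, (congrArg Fin.val h2).symm, ?_⟩
      have : Z y + 1 = Z x := hj
      simp [Nat.dist, this.symm]

end VIED

namespace VIED

variable {N : ℕ}

lemma adj_mk (hN : 0 < N) {a b c a' b' c' : ℕ}
    (ha : a < 4 * N) (hb : b < 2 * N + 2) (hc : c < 2)
    (ha' : a' < 4 * N) (hb' : b' < 2 * N + 2) (hc' : c' < 2)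
    (h : (a + 1 = a' ∧ b = b' ∧ c = c') ∨ (a' + 1 = a ∧ b = b' ∧ c = c') ∨
         (b + 1 = b' ∧ a = a' ∧ c = c') ∨ (b' + 1 = b ∧ a = a' ∧ c = c') ∨
         (c + 1 = c' ∧ a = a' ∧ b = b') ∨ (c' + 1 = c ∧ a = a' ∧ b = b')) :
    (HG N).Adj (pt hN a b c) (pt hN a' b' c') := by
  rw [show HG N = SimpleGraph.fromRel _ from rfl, fromRel_adj]
  have hX : X (pt hN a b c) = a := X_pt hN ha
  have hX' : X (pt hN a' b' c') = a' := X_pt hN ha'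
  have hY : Y (pt hN a b c) = b := Y_pt hN hb
  have hY' : Y (pt hN a' b' c') = b' := Y_pt hN hb'
  have hZ : Z (pt hN a b c) = c := Z_pt hN hc
  have hZ' : Z (pt hN a' b' c') = c' := Z_pt hN hc'
  constructor
  · intro he
    rw [he] at hX hY hZ
    omega
  · have hcoord : ∀ (u v : GP N) (j : Fin 3), X u = X v → Y u = Y v → Z u = Z v →
        j = i0 ∨ j = i1 → u j = v j := by
      intro u v j h0 h1 h2 hj
      rcases hj with rfl | rfl
      · exact Fin.ext h0
      · exact Fin.ext h1
    rcases h with ⟨h1, h2, h3⟩ | ⟨h1, h2, h3⟩ | ⟨h1, h2, h3⟩ | ⟨h1, h2, h3⟩ | ⟨h1, h2, h3⟩ | ⟨h1, h2, h3⟩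
    · left; exact ⟨i0, by rw [show ((pt hN a b c) i0 : ℕ) = a from hX,
        show ((pt hN a' b' c') i0 : ℕ) = a' from hX']; omega,
        by intro i hi
           match i with
           | ⟨0, h⟩ => exact absurd (Fin.ext rfl) hi
           | ⟨1, h⟩ => exact Fin.ext (by rw [show ((pt hN a b c) ⟨1,h⟩ : ℕ) = Y _ from rfl,
                show ((pt hN a' b' c') ⟨1,h⟩ : ℕ) = Y _ from rfl, hY, hY']; omega)
           | ⟨2, h⟩ => exact Fin.ext (by rw [show ((pt hN a b c) ⟨2,h⟩ : ℕ) = Z _ from rfl,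
                show ((pt hN a' b' c') ⟨2,h⟩ : ℕ) = Z _ from rfl, hZ, hZ']; omega)⟩
    · right; exact ⟨i0, by rw [show ((pt hN a' b' c') i0 : ℕ) = a' from hX',
        show ((pt hN a b c) i0 : ℕ) = a from hX]; omega,
        by intro i hi
           match i with
           | ⟨0, h⟩ => exact absurd (Fin.ext rfl) hi
           | ⟨1, h⟩ => exact Fin.ext (by rw [show ((pt hN a b c) ⟨1,h⟩ : ℕ) = Y _ from rfl,
                show ((pt hN a' b' c') ⟨1,h⟩ : ℕ) = Y _ from rfl, hY, hY']; omega)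
           | ⟨2, h⟩ => exact Fin.ext (by rw [show ((pt hN a b c) ⟨2,h⟩ : ℕ) = Z _ from rfl,
                show ((pt hN a' b' c') ⟨2,h⟩ : ℕ) = Z _ from rfl, hZ, hZ']; omega)⟩
    · left; exact ⟨i1, by rw [show ((pt hN a b c) i1 : ℕ) = b from hY,
        show ((pt hN a' b' c') i1 : ℕ) = b' from hY']; omega,
        by intro i hi
           match i with
           | ⟨1, h⟩ => exact absurd (Fin.ext rfl) hi
           | ⟨0, h⟩ => exact Fin.ext (by rw [show ((pt hN a b c) ⟨0,h⟩ : ℕ) = X _ from rfl,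
                show ((pt hN a' b' c') ⟨0,h⟩ : ℕ) = X _ from rfl, hX, hX']; omega)
           | ⟨2, h⟩ => exact Fin.ext (by rw [show ((pt hN a b c) ⟨2,h⟩ : ℕ) = Z _ from rfl,
                show ((pt hN a' b' c') ⟨2,h⟩ : ℕ) = Z _ from rfl, hZ, hZ']; omega)⟩
    · right; exact ⟨i1, by rw [show ((pt hN a' b' c') i1 : ℕ) = b' from hY',
        show ((pt hN a b c) i1 : ℕ) = b from hY]; omega,
        by intro i hi
           match i with
           | ⟨1, h⟩ => exact absurd (Fin.ext rfl) hi
           | ⟨0, h⟩ => exact Fin.ext (by rw [show ((pt hN a b c) ⟨0,h⟩ : ℕ) = X _ from rfl,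
                show ((pt hN a' b' c') ⟨0,h⟩ : ℕ) = X _ from rfl, hX, hX']; omega)
           | ⟨2, h⟩ => exact Fin.ext (by rw [show ((pt hN a b c) ⟨2,h⟩ : ℕ) = Z _ from rfl,
                show ((pt hN a' b' c') ⟨2,h⟩ : ℕ) = Z _ from rfl, hZ, hZ']; omega)⟩
    · left; exact ⟨i2, by rw [show ((pt hN a b c) i2 : ℕ) = c from hZ,
        show ((pt hN a' b' c') i2 : ℕ) = c' from hZ']; omega,
        by intro i hi
           match i with
           | ⟨2, h⟩ => exact absurd (Fin.ext rfl) hi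
           | ⟨0, h⟩ => exact Fin.ext (by rw [show ((pt hN a b c) ⟨0,h⟩ : ℕ) = X _ from rfl,
                show ((pt hN a' b' c') ⟨0,h⟩ : ℕ) = X _ from rfl, hX, hX']; omega)
           | ⟨1, h⟩ => exact Fin.ext (by rw [show ((pt hN a b c) ⟨1,h⟩ : ℕ) = Y _ from rfl,
                show ((pt hN a' b' c') ⟨1,h⟩ : ℕ) = Y _ from rfl, hY, hY']; omega)⟩
    · right; exact ⟨i2, by rw [show ((pt hN a' b' c') i2 : ℕ) = c' from hZ',
        show ((pt hN a b c) i2 : ℕ) = c from hZ]; omega,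
        by intro i hi
           match i with
           | ⟨2, h⟩ => exact absurd (Fin.ext rfl) hi
           | ⟨0, h⟩ => exact Fin.ext (by rw [show ((pt hN a b c) ⟨0,h⟩ : ℕ) = X _ from rfl,
                show ((pt hN a' b' c') ⟨0,h⟩ : ℕ) = X _ from rfl, hX, hX']; omega)
           | ⟨1, h⟩ => exact Fin.ext (by rw [show ((pt hN a b c) ⟨1,h⟩ : ℕ) = Y _ from rfl,
                show ((pt hN a' b' c') ⟨1,h⟩ : ℕ) = Y _ from rfl, hY, hY']; omega)⟩

def L1 (x y : GP N) : ℕ := Nat.dist (X x) (X y) + Nat.dist (Y x) (Y y) + Nat.dist (Z x) (Z y)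

lemma L1_walk_le {x y : GP N} (w : (HG N).Walk x y) : L1 x y ≤ w.length := by
  induction w with
  | nil => simp [L1, Nat.dist]
  | cons h p ih =>
    have h' := adj_coords h
    simp only [SimpleGraph.Walk.length_cons]
    simp only [L1, Nat.dist] at *
    omega

end VIED
namespace VIED

variable {N : ℕ}

lemma exists_step (hN : 0 < N) (x y : GP N) (hne : x ≠ y) :
    ∃ x' : GP N, (HG N).Adj x x' ∧ L1 x' y + 1 = L1 x y := by
  have hx := pt_eta hN x
  have hXx := X_lt x; have hYx := Y_lt x; have hZx := Z_lt x
  have hXy := X_lt y; have hYy := Y_lt y; have hZy := Z_lt y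
  have hne' : ¬(X x = X y ∧ Y x = Y y ∧ Z x = Z y) := by
    rintro ⟨h0, h1, h2⟩; exact hne (GP.ext h0 h1 h2)
  by_cases h0 : X x = X y
  · by_cases h1 : Y x = Y y
    · rcases Nat.lt_or_ge (Z x) (Z y) with hlt | hge
      · refine ⟨pt hN (X x) (Y x) (Z x + 1), ?_, ?_⟩
        · have hadj := adj_mk hN hXx hYx hZx hXx hYx (show Z x + 1 < 2 by omega)
            (Or.inr <| Or.inr <| Or.inr <| Or.inr <| Or.inl ⟨rfl, rfl, rfl⟩)
          rwa [hx] at hadj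
        · simp only [L1, X_pt hN hXx, Y_pt hN hYx, Z_pt hN (show Z x + 1 < 2 by omega)]
          simp only [Nat.dist]; omega
      · refine ⟨pt hN (X x) (Y x) (Z x - 1), ?_, ?_⟩
        · have hadj := adj_mk hN hXx hYx hZx hXx hYx (show Z x - 1 < 2 by omega)
            (Or.inr <| Or.inr <| Or.inr <| Or.inr <| Or.inr ⟨by omega, rfl, rfl⟩)
          rwa [hx] at hadj
        · simp only [L1, X_pt hN hXx, Y_pt hN hYx, Z_pt hN (show Z x - 1 < 2 by omega)]
          simp only [Nat.dist]; omega
    · rcases Nat.lt_or_ge (Y x) (Y y) with hlt | hge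
      · refine ⟨pt hN (X x) (Y x + 1) (Z x), ?_, ?_⟩
        · have hadj := adj_mk hN hXx hYx hZx hXx (show Y x + 1 < 2*N+2 by omega) hZx
            (Or.inr <| Or.inr <| Or.inl ⟨rfl, rfl, rfl⟩)
          rwa [hx] at hadj
        · simp only [L1, X_pt hN hXx, Y_pt hN (show Y x + 1 < 2*N+2 by omega), Z_pt hN hZx]
          simp only [Nat.dist]; omega
      · refine ⟨pt hN (X x) (Y x - 1) (Z x), ?_, ?_⟩
        · have hadj := adj_mk hN hXx hYx hZx hXx (show Y x - 1 < 2*N+2 by omega) hZx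
            (Or.inr <| Or.inr <| Or.inr <| Or.inl ⟨by omega, rfl, rfl⟩)
          rwa [hx] at hadj
        · simp only [L1, X_pt hN hXx, Y_pt hN (show Y x - 1 < 2*N+2 by omega), Z_pt hN hZx]
          simp only [Nat.dist]; omega
  · rcases Nat.lt_or_ge (X x) (X y) with hlt | hge
    · refine ⟨pt hN (X x + 1) (Y x) (Z x), ?_, ?_⟩
      · have hadj := adj_mk hN hXx hYx hZx (show X x + 1 < 4*N by omega) hYx hZx
          (Or.inl ⟨rfl, rfl, rfl⟩)
        rwa [hx] at hadj
      · simp only [L1, X_pt hN (show X x + 1 < 4*N by omega), Y_pt hN hYx, Z_pt hN hZx]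
        simp only [Nat.dist]; omega
    · refine ⟨pt hN (X x - 1) (Y x) (Z x), ?_, ?_⟩
      · have hadj := adj_mk hN hXx hYx hZx (show X x - 1 < 4*N by omega) hYx hZx
          (Or.inr <| Or.inl ⟨by omega, rfl, rfl⟩)
        rwa [hx] at hadj
      · simp only [L1, X_pt hN (show X x - 1 < 4*N by omega), Y_pt hN hYx, Z_pt hN hZx]
        simp only [Nat.dist]; omega

lemma reach_aux (hN : 0 < N) : ∀ (n : ℕ) (x y : GP N), L1 x y ≤ n → (HG N).Reachable x y := by
  intro n
  induction n with
  | zero =>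
    intro x y h
    have : x = y := by
      apply GP.ext <;> (simp only [L1, Nat.dist] at h; omega)
    exact this ▸ SimpleGraph.Reachable.refl x
  | succ n ih =>
    intro x y h
    by_cases hne : x = y
    · exact hne ▸ SimpleGraph.Reachable.refl x
    · obtain ⟨x', hadj, hL⟩ := exists_step hN x y hne
      exact (hadj.reachable).trans (ih x' y (by omega))

lemma reach (hN : 0 < N) (x y : GP N) : (HG N).Reachable x y :=
  reach_aux hN (L1 x y) x y le_rfl

lemma two_le_dist (hN : 0 < N) {x y : GP N} (h : 2 ≤ L1 x y) : 2 ≤ (HG N).dist x y := by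
  obtain ⟨p, hp⟩ := (reach hN x y).exists_walk_length_eq_dist
  calc 2 ≤ L1 x y := h
    _ ≤ p.length := L1_walk_le p
    _ = _ := hp

end VIED
namespace VIED

variable {N : ℕ}

def mkWalk {β : Type*} {H : SimpleGraph β} : (a b : β) → (l : List β) →
    List.Chain H.Adj a (l ++ [b]) → H.Walk a b
  | _, _, [], h => SimpleGraph.Walk.cons (List.rel_of_chain_cons h) SimpleGraph.Walk.nil
  | _, b, c :: l, h =>
    SimpleGraph.Walk.cons (List.rel_of_chain_cons h)
      (mkWalk c b l (List.chain_of_chain_cons h))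

lemma mkWalk_support {β : Type*} {H : SimpleGraph β} :
    ∀ (a b : β) (l : List β) (h : List.Chain H.Adj a (l ++ [b])),
      (mkWalk a b l h).support = a :: (l ++ [b])
  | _, _, [], _ => rfl
  | a, b, c :: l, h => by
    simp [mkWalk, mkWalk_support c b l (List.chain_of_chain_cons h)]

def off (p : Fin 4) : ℕ :=
  match p.val with
  | 0 => 1
  | 1 => 0
  | 2 => 2
  | _ => 3

lemma off_lt : ∀ p : Fin 4, off p < 4 := by decide

lemma off_inj : ∀ {p q : Fin 4}, off p = off q → p = q := by decide

def jst (p : Fin 4) : ℕ :=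
  match p.val with
  | 3 => 1
  | _ => 0

lemma jst_le : ∀ p : Fin 4, jst p ≤ 1 := by decide

def colOf (i : ℕ) (p : Fin 4) : ℕ := 4 * i + off p

def vert (hN : 0 < N) (i : ℕ) : GP N := pt hN (4 * i + 1) 0 0

def pre (hN : 0 < N) (i : ℕ) (p : Fin 4) : List (GP N) :=
  match p.val with
  | 0 => []
  | 1 => [pt hN (4 * i) 0 0]
  | 2 => [pt hN (4 * i + 2) 0 0]
  | _ => [pt hN (4 * i + 1) 1 0, pt hN (4 * i + 2) 1 0, pt hN (4 * i + 3) 1 0]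

def cols (hN : 0 < N) (i : ℕ) (p : Fin 4) (r : ℕ) : List (GP N) :=
  (List.range (r + 1 - jst p)).map fun t => pt hN (colOf i p) (jst p + t) 1

def armA (hN : 0 < N) (i : ℕ) (p : Fin 4) (r : ℕ) : List (GP N) :=
  pre hN i p ++ cols hN i p r

def rowRun (hN : 0 < N) (c1 c2 r : ℕ) : List (GP N) :=
  (List.range (Nat.dist c1 c2 + 1)).map fun t => pt hN (if c1 ≤ c2 then c1 + t else c1 - t) r 0

def innerL (hN : 0 < N) (i j : ℕ) (p q : Fin 4) (r : ℕ) : List (GP N) :=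
  armA hN i p r ++ rowRun hN (colOf i p) (colOf j q) r ++ (armA hN j q r).reverse

lemma seg_head {α : Type*} (f : ℕ → α) {k : ℕ} (hk : 0 < k) :
    ((List.range k).map f).head? = some (f 0) := by
  obtain ⟨m, rfl⟩ : ∃ m, k = m + 1 := ⟨k - 1, by omega⟩
  rw [List.range_succ_eq_map]
  simp

lemma seg_last {α : Type*} (f : ℕ → α) {k : ℕ} (hk : 0 < k) :
    ((List.range k).map f).getLast? = some (f (k - 1)) := by
  obtain ⟨m, rfl⟩ : ∃ m, k = m + 1 := ⟨k - 1, by omega⟩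
  rw [List.range_succ, List.map_append]
  simp

lemma seg_chain' {α : Type*} {R : α → α → Prop} (f : ℕ → α) (k : ℕ)
    (h : ∀ t, t + 1 < k → R (f t) (f (t + 1))) : List.Chain' R ((List.range k).map f) := by
  cases k with
  | zero => exact List.isChain_nil
  | succ m =>
    rw [show List.Chain' = List.IsChain from rfl, List.isChain_map]
    exact (List.isChain_range_succ _ _).mpr fun t ht => h t (by omega)

lemma mem_cols {hN : 0 < N} {i : ℕ} {p : Fin 4} {r : ℕ} {x : GP N} :
    x ∈ cols hN i p r ↔ ∃ t, jst p ≤ t ∧ t ≤ r ∧ x = pt hN (colOf i p) t 1 := by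
  have hj := jst_le p
  simp only [cols, List.mem_map, List.mem_range]
  constructor
  · rintro ⟨t, ht, rfl⟩; exact ⟨jst p + t, by omega, by omega, rfl⟩
  · rintro ⟨t, h1, h2, rfl⟩; exact ⟨t - jst p, by omega, by rw [show jst p + (t - jst p) = t by omega]⟩

lemma mem_rowRun {hN : 0 < N} {c1 c2 r : ℕ} {x : GP N} :
    x ∈ rowRun hN c1 c2 r ↔ ∃ c, min c1 c2 ≤ c ∧ c ≤ max c1 c2 ∧ x = pt hN c r 0 := by
  simp only [rowRun, List.mem_map, List.mem_range]
  constructor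
  · rintro ⟨t, ht, rfl⟩
    refine ⟨if c1 ≤ c2 then c1 + t else c1 - t, ?_, ?_, rfl⟩ <;>
      (split <;> simp [Nat.dist] at * <;> omega)
  · rintro ⟨c, h1, h2, rfl⟩
    by_cases h : c1 ≤ c2
    · exact ⟨c - c1, by simp [Nat.dist] at *; omega,
        by rw [if_pos h, show c1 + (c - c1) = c by simp at h1 h2; omega]⟩
    · exact ⟨c1 - c, by simp [Nat.dist] at *; omega,
        by rw [if_neg h, show c1 - (c1 - c) = c by simp at h1 h2; omega]⟩

lemma mem_pre {hN : 0 < N} {i : ℕ} {p : Fin 4} {x : GP N} :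
    x ∈ pre hN i p ↔
      ((p = 1 ∧ x = pt hN (4 * i) 0 0) ∨
       (p = 2 ∧ x = pt hN (4 * i + 2) 0 0) ∨
       (p = 3 ∧ (x = pt hN (4 * i + 1) 1 0 ∨ x = pt hN (4 * i + 2) 1 0 ∨ x = pt hN (4 * i + 3) 1 0))) := by
  obtain ⟨pv, hp⟩ := p
  interval_cases pv <;>
    simp [pre, show ∀ h, (⟨0, h⟩ : Fin 4) = 0 from fun _ => rfl,
      show ∀ h, (⟨1, h⟩ : Fin 4) = 1 from fun _ => rfl,
      show ∀ h, (⟨2, h⟩ : Fin 4) = 2 from fun _ => rfl,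
      show ∀ h, (⟨3, h⟩ : Fin 4) = 3 from fun _ => rfl, Fin.ext_iff] <;>
    tauto

lemma mem_armA {hN : 0 < N} {i : ℕ} {p : Fin 4} {r : ℕ} {x : GP N} :
    x ∈ armA hN i p r ↔
      ((p = 1 ∧ x = pt hN (4 * i) 0 0) ∨
       (p = 2 ∧ x = pt hN (4 * i + 2) 0 0) ∨
       (p = 3 ∧ (x = pt hN (4 * i + 1) 1 0 ∨ x = pt hN (4 * i + 2) 1 0 ∨ x = pt hN (4 * i + 3) 1 0)) ∨
       (∃ t, jst p ≤ t ∧ t ≤ r ∧ x = pt hN (colOf i p) t 1)) := by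
  simp only [armA, List.mem_append, mem_cols, mem_pre]
  tauto


section ChainLemmas

variable {N : ℕ} (hN : 0 < N) {i j r : ℕ} {p q : Fin 4}

lemma cols_ne_nil (hr : jst p ≤ r) : cols hN i p r ≠ [] := by
  have hj := jst_le p
  intro h
  have hl := congrArg List.length h
  simp [cols] at hl
  omega

lemma cols_head (hr : jst p ≤ r) : (cols hN i p r).head? = some (pt hN (colOf i p) (jst p) 1) := by
  rw [cols, seg_head _ (show 0 < r + 1 - jst p from by omega)]
  simp

lemma cols_last (hr : jst p ≤ r) :
    (cols hN i p r).getLast? = some (pt hN (colOf i p) r 1) := by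
  rw [cols, seg_last _ (show 0 < r + 1 - jst p from by omega)]
  rw [show jst p + (r + 1 - jst p - 1) = r from by have := jst_le p; omega]

lemma chain'_cols (hi : i < N) (hrN : r ≤ 2 * N + 1) :
    List.Chain' (HG N).Adj (cols hN i p r) := by
  have h1 := off_lt p
  have h2 := jst_le p
  apply seg_chain'
  intro t ht
  have hcol : colOf i p < 4 * N := by simp only [colOf]; omega
  exact adj_mk hN hcol (by omega) (by omega) hcol (by omega) (by omega)
    (Or.inr <| Or.inr <| Or.inl ⟨by omega, rfl, rfl⟩)

lemma chain'_arm (hi : i < N) (hr2 : 2 ≤ r) (hrN : r ≤ 2 * N + 1) :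
    List.Chain' (HG N).Adj (vert hN i :: armA hN i p r) := by
  have hchain := chain'_cols hN (p := p) (r := r) hi hrN
  have hhead := cols_head hN (i := i) (p := p) (r := r) (le_trans (jst_le p) (by omega))
  obtain ⟨pv, hp⟩ := p
  interval_cases pv
  · rw [show pt hN (colOf i ⟨0, hp⟩) (jst ⟨0, hp⟩) 1 = pt hN (4*i+1) 0 1 from rfl] at hhead
    show List.Chain' (HG N).Adj (vert hN i :: cols hN i ⟨0, hp⟩ r)
    rw [show List.Chain' = List.IsChain from rfl, List.isChain_cons]
    refine ⟨fun y hy => ?_, hchain⟩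
    rw [hhead] at hy; cases hy
    exact adj_mk hN (by omega) (by omega) (by omega) (by omega) (by omega) (by omega)
      (Or.inr <| Or.inr <| Or.inr <| Or.inr <| Or.inl ⟨rfl, rfl, rfl⟩)
  · rw [show pt hN (colOf i ⟨1, hp⟩) (jst ⟨1, hp⟩) 1 = pt hN (4*i) 0 1 from rfl] at hhead
    show List.Chain' (HG N).Adj (vert hN i :: pt hN (4*i) 0 0 :: cols hN i ⟨1, hp⟩ r)
    rw [show List.Chain' = List.IsChain from rfl, List.isChain_cons_cons]
    refine ⟨adj_mk hN (by omega) (by omega) (by omega) (by omega) (by omega) (by omega)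
      (Or.inr <| Or.inl ⟨by omega, rfl, rfl⟩), ?_⟩
    rw [List.isChain_cons]
    refine ⟨fun y hy => ?_, hchain⟩
    rw [hhead] at hy; cases hy
    exact adj_mk hN (by omega) (by omega) (by omega) (by omega) (by omega) (by omega)
      (Or.inr <| Or.inr <| Or.inr <| Or.inr <| Or.inl ⟨rfl, rfl, rfl⟩)
  · rw [show pt hN (colOf i ⟨2, hp⟩) (jst ⟨2, hp⟩) 1 = pt hN (4*i+2) 0 1 from rfl] at hhead
    show List.Chain' (HG N).Adj (vert hN i :: pt hN (4*i+2) 0 0 :: cols hN i ⟨2, hp⟩ r)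
    rw [show List.Chain' = List.IsChain from rfl, List.isChain_cons_cons]
    refine ⟨adj_mk hN (by omega) (by omega) (by omega) (by omega) (by omega) (by omega)
      (Or.inl ⟨rfl, rfl, rfl⟩), ?_⟩
    rw [List.isChain_cons]
    refine ⟨fun y hy => ?_, hchain⟩
    rw [hhead] at hy; cases hy
    exact adj_mk hN (by omega) (by omega) (by omega) (by omega) (by omega) (by omega)
      (Or.inr <| Or.inr <| Or.inr <| Or.inr <| Or.inl ⟨rfl, rfl, rfl⟩)
  · rw [show pt hN (colOf i ⟨3, hp⟩) (jst ⟨3, hp⟩) 1 = pt hN (4*i+3) 1 1 from rfl] at hhead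
    show List.Chain' (HG N).Adj (vert hN i :: pt hN (4*i+1) 1 0 :: pt hN (4*i+2) 1 0 ::
      pt hN (4*i+3) 1 0 :: cols hN i ⟨3, hp⟩ r)
    rw [show List.Chain' = List.IsChain from rfl, List.isChain_cons_cons]
    refine ⟨adj_mk hN (by omega) (by omega) (by omega) (by omega) (by omega) (by omega)
      (Or.inr <| Or.inr <| Or.inl ⟨rfl, rfl, rfl⟩), ?_⟩
    rw [List.isChain_cons_cons]
    refine ⟨adj_mk hN (by omega) (by omega) (by omega) (by omega) (by omega) (by omega)
      (Or.inl ⟨rfl, rfl, rfl⟩), ?_⟩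
    rw [List.isChain_cons_cons]
    refine ⟨adj_mk hN (by omega) (by omega) (by omega) (by omega) (by omega) (by omega)
      (Or.inl ⟨rfl, rfl, rfl⟩), ?_⟩
    rw [List.isChain_cons]
    refine ⟨fun y hy => ?_, hchain⟩
    rw [hhead] at hy; cases hy
    exact adj_mk hN (by omega) (by omega) (by omega) (by omega) (by omega) (by omega)
      (Or.inr <| Or.inr <| Or.inr <| Or.inr <| Or.inl ⟨rfl, rfl, rfl⟩)

lemma arm_last (hr : jst p ≤ r) :
    (vert hN i :: armA hN i p r).getLast? = some (pt hN (colOf i p) r 1) := by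
  rw [show vert hN i :: armA hN i p r = (vert hN i :: pre hN i p) ++ cols hN i p r by
    simp [armA]]
  rw [List.getLast?_append_of_ne_nil _ (cols_ne_nil hN hr), cols_last hN hr]

lemma rowRun_ne_nil : rowRun hN i j r ≠ [] := by
  intro h
  have := congrArg List.length h
  simp [rowRun] at this

lemma rowRun_head : (rowRun hN i j r).head? = some (pt hN i r 0) := by
  rw [rowRun, seg_head _ (by omega),
    show (if i ≤ j then i + 0 else i - 0) = i from by split <;> omega]

lemma rowRun_last : (rowRun hN i j r).getLast? = some (pt hN j r 0) := by
  rw [rowRun, seg_last _ (by omega), show Nat.dist i j + 1 - 1 = Nat.dist i j from rfl,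
    show (if i ≤ j then i + Nat.dist i j else i - Nat.dist i j) = j from by
      simp only [Nat.dist]; split <;> omega]

lemma chain'_rowRun (hi : i < 4 * N) (hj : j < 4 * N) (hrN : r ≤ 2 * N + 1) :
    List.Chain' (HG N).Adj (rowRun hN i j r) := by
  apply seg_chain'
  intro t ht
  simp only [Nat.dist] at ht
  by_cases h : i ≤ j
  · simp only [if_pos h]
    exact adj_mk hN (by omega) (by omega) (by omega) (by omega) (by omega) (by omega)
      (Or.inl ⟨by omega, rfl, rfl⟩)
  · simp only [if_neg h]
    exact adj_mk hN (by omega) (by omega) (by omega) (by omega) (by omega) (by omega)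
      (Or.inr <| Or.inl ⟨by omega, rfl, rfl⟩)

lemma chain_supp (hi : i < N) (hj : j < N) (hr2 : 2 ≤ r) (hrN : r ≤ 2 * N + 1) :
    List.Chain (HG N).Adj (vert hN i) (innerL hN i j p q r ++ [vert hN j]) := by
  have hoffp := off_lt p
  have hoffq := off_lt q
  have hjp := jst_le p
  have hjq := jst_le q
  show List.Chain' (HG N).Adj (vert hN i :: (innerL hN i j p q r ++ [vert hN j]))
  have e : vert hN i :: (innerL hN i j p q r ++ [vert hN j]) =
      (vert hN i :: armA hN i p r) ++
        (rowRun hN (colOf i p) (colOf j q) r ++ (vert hN j :: armA hN j q r).reverse) := by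
    simp [innerL, List.reverse_cons]
  rw [e]
  rw [show List.Chain' = List.IsChain from rfl, List.isChain_append]
  refine ⟨chain'_arm hN hi hr2 hrN, ?_, ?_⟩
  · rw [List.isChain_append]
    refine ⟨chain'_rowRun hN (by simp only [colOf]; omega) (by simp only [colOf]; omega) hrN, ?_, ?_⟩
    · rw [List.isChain_reverse]
      exact ((chain'_arm hN (p := q) hj hr2 hrN).imp fun a b h => h.symm)
    · intro x hx y hy
      rw [rowRun_last hN] at hx
      cases hx
      rw [List.head?_reverse, arm_last hN (by omega)] at hy
      cases hy
      have hc : colOf j q < 4 * N := by simp only [colOf]; omega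
      exact adj_mk hN hc (by omega) (by omega) hc (by omega) (by omega)
        (Or.inr <| Or.inr <| Or.inr <| Or.inr <| Or.inl ⟨rfl, rfl, rfl⟩)
  · intro x hx y hy
    rw [arm_last hN (by omega)] at hx
    cases hx
    rw [List.head?_append_of_ne_nil _ (rowRun_ne_nil hN), rowRun_head hN] at hy
    cases hy
    have hc : colOf i p < 4 * N := by simp only [colOf]; omega
    exact adj_mk hN hc (by omega) (by omega) hc (by omega) (by omega)
      (Or.inr <| Or.inr <| Or.inr <| Or.inr <| Or.inr ⟨rfl, rfl, rfl⟩)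

end ChainLemmas


section Coords

variable {N : ℕ} (hN : 0 < N) {i j r c1 c2 : ℕ} {p q : Fin 4} {x : GP N}

lemma colOf_lt (hi : i < N) : colOf i p < 4 * N := by
  have := off_lt p; simp only [colOf]; omega

lemma armA_coords (hi : i < N) (hrN : r ≤ 2 * N + 1) (hx : x ∈ armA hN i p r) :
    4 * i ≤ X x ∧ X x ≤ 4 * i + 3 ∧
      ((Z x = 1 ∧ X x = colOf i p ∧ jst p ≤ Y x ∧ Y x ≤ r) ∨
       (Z x = 0 ∧
         ((p = 1 ∧ X x = 4 * i ∧ Y x = 0) ∨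
          (p = 2 ∧ X x = 4 * i + 2 ∧ Y x = 0) ∨
          (p = 3 ∧ 4 * i + 1 ≤ X x ∧ Y x = 1)))) := by
  have hoff := off_lt p
  have hcol : colOf i p < 4 * N := colOf_lt hi
  have hjst := jst_le p
  rcases mem_armA.mp hx with ⟨hp, rfl⟩ | ⟨hp, rfl⟩ | ⟨hp, (rfl | rfl | rfl)⟩ | ⟨t, h1, h2, rfl⟩
  all_goals
    first
    | (rw [X_pt hN (by omega), Y_pt hN (by omega), Z_pt hN (by omega)]; omega)
    | (rw [X_pt hN (by omega), Y_pt hN (by omega), Z_pt hN (by omega)]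
       refine ⟨by omega, by omega, Or.inr ⟨rfl, by tauto⟩⟩)
    | (rw [X_pt hN hcol, Y_pt hN (by omega), Z_pt hN (by omega)]
       exact ⟨by simp only [colOf]; omega, by simp only [colOf]; omega,
         Or.inl ⟨rfl, rfl, by omega, by omega⟩⟩)

lemma rowRun_coords (hc1 : c1 < 4 * N) (hc2 : c2 < 4 * N) (hr : r ≤ 2 * N + 1)
    (hx : x ∈ rowRun hN c1 c2 r) :
    Z x = 0 ∧ Y x = r ∧ min c1 c2 ≤ X x ∧ X x ≤ max c1 c2 := by
  rcases mem_rowRun.mp hx with ⟨c, h1, h2, rfl⟩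
  have hc : c < 4 * N := by rcases Nat.le_total c1 c2 with h | h <;> simp [h] at h1 h2 <;> omega
  rw [X_pt hN hc, Y_pt hN (by omega), Z_pt hN (by omega)]
  exact ⟨rfl, rfl, h1, h2⟩

lemma arm_arm (hi : i < N) (hj : j < N) (hr : r ≤ 2 * N + 1) {r' : ℕ} (hr' : r' ≤ 2 * N + 1)
    (hx : x ∈ armA hN i p r) (hx' : x ∈ armA hN j q r') : i = j ∧ p = q := by
  obtain ⟨ha1, ha2, hsh⟩ := armA_coords hN hi hr hx
  obtain ⟨hb1, hb2, hsh'⟩ := armA_coords hN hj hr' hx'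
  have hij : i = j := by omega
  subst hij
  have hoffp := off_lt p
  have hoffq := off_lt q
  refine ⟨rfl, ?_⟩
  rcases hsh with ⟨hz, hc, -⟩ | ⟨hz, hs⟩ <;> rcases hsh' with ⟨hz', hc', -⟩ | ⟨hz', hs'⟩
  · exact off_inj (by simp only [colOf] at hc hc'; omega)
  · omega
  · omega
  · rcases hs with ⟨rfl, h1, h2⟩ | ⟨rfl, h1, h2⟩ | ⟨rfl, h1, h2⟩ <;>
      rcases hs' with ⟨rfl, h1', h2'⟩ | ⟨rfl, h1', h2'⟩ | ⟨rfl, h1', h2'⟩ <;>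
      first | rfl | omega

lemma arm_row (hi : i < N) (hr : r ≤ 2 * N + 1) {r' : ℕ} (hr2 : 2 ≤ r') (hr' : r' ≤ 2 * N + 1)
    (hc1 : c1 < 4 * N) (hc2 : c2 < 4 * N)
    (hx : x ∈ armA hN i p r) (hx' : x ∈ rowRun hN c1 c2 r') : False := by
  obtain ⟨-, -, hsh⟩ := armA_coords hN hi hr hx
  obtain ⟨hz, hy, -, -⟩ := rowRun_coords hN hc1 hc2 hr' hx'
  rcases hsh with ⟨hz', -, -, hyr⟩ | ⟨hz', hs⟩
  · omega
  · rcases hs with ⟨-, -, h2⟩ | ⟨-, -, h2⟩ | ⟨-, -, h2⟩ <;> omega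

lemma row_row {r' : ℕ} (hc1 : c1 < 4 * N) (hc2 : c2 < 4 * N) {c1' c2' : ℕ}
    (hc1' : c1' < 4 * N) (hc2' : c2' < 4 * N) (hr : r ≤ 2 * N + 1) (hr' : r' ≤ 2 * N + 1)
    (hx : x ∈ rowRun hN c1 c2 r) (hx' : x ∈ rowRun hN c1' c2' r') : r = r' := by
  obtain ⟨-, hy, -, -⟩ := rowRun_coords hN hc1 hc2 hr hx
  obtain ⟨-, hy', -, -⟩ := rowRun_coords hN hc1' hc2' hr' hx'
  omega

lemma vert_coords : X (vert hN i) = 4 * i + 1 ∧ Y (vert hN i) = 0 ∧ Z (vert hN i) = 0 → True :=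
  fun _ => trivial

end Coords


section NodupIso

variable {N : ℕ} (hN : 0 < N) {u i j r c1 c2 : ℕ} {p q : Fin 4} {x : GP N}

lemma pt_ne {a b c a' b' c' : ℕ} (ha : a < 4 * N) (hb : b < 2 * N + 2) (hc : c < 2)
    (ha' : a' < 4 * N) (hb' : b' < 2 * N + 2) (hc' : c' < 2)
    (h : ¬(a = a' ∧ b = b' ∧ c = c')) : pt hN a b c ≠ pt hN a' b' c' := fun he =>
  h ((pt_inj hN ha hb hc ha' hb' hc').mp he)

lemma nodup_pre (hi : i < N) : (pre hN i p).Nodup := by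
  obtain ⟨pv, hp⟩ := p
  interval_cases pv
  · exact List.nodup_nil
  · exact List.nodup_singleton _
  · exact List.nodup_singleton _
  · refine List.nodup_cons.mpr ⟨?_, List.nodup_cons.mpr ⟨?_, List.nodup_singleton _⟩⟩
    · intro h
      simp only [List.mem_cons, List.mem_singleton, List.not_mem_nil, or_false] at h
      rcases h with h | h <;> exact absurd
        ((pt_inj hN (by omega) (by omega) (by omega) (by omega) (by omega) (by omega)).mp h)
        (by omega)
    · intro h
      simp only [List.mem_singleton, List.mem_cons, List.not_mem_nil, or_false] at h
      exact absurd
        ((pt_inj hN (by omega) (by omega) (by omega) (by omega) (by omega) (by omega)).mp h)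
        (by omega)

lemma nodup_cols (hi : i < N) (hr : r ≤ 2 * N + 1) : (cols hN i p r).Nodup := by
  apply List.Nodup.map_on ?_ List.nodup_range
  intro t ht t' ht' he
  simp only [List.mem_range] at ht ht'
  have hj := jst_le p
  have := (pt_inj hN (colOf_lt hi) (by omega) (by omega) (colOf_lt hi) (by omega) (by omega)).mp he
  omega

lemma mem_pre_Z (hx : x ∈ pre hN i p) : Z x = 0 ∧ Y x ≤ 1 := by
  rcases mem_pre.mp hx with ⟨-, rfl⟩ | ⟨-, rfl⟩ | ⟨-, (rfl | rfl | rfl)⟩ <;>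
    rw [Z_pt hN (by omega), Y_pt hN (by omega)] <;> omega

lemma mem_cols_Z (hx : x ∈ cols hN i p r) : Z x = 1 := by
  rcases mem_cols.mp hx with ⟨t, -, -, rfl⟩
  rw [Z_pt hN (by omega)]

lemma nodup_armA (hi : i < N) (hr : r ≤ 2 * N + 1) : (armA hN i p r).Nodup := by
  refine (nodup_pre hN hi).append (nodup_cols hN hi hr) ?_
  intro a ha ha'
  have h1 := mem_pre_Z hN ha
  have h2 := mem_cols_Z hN ha'
  omega

lemma nodup_rowRun (hc1 : c1 < 4 * N) (hc2 : c2 < 4 * N) (hr : r ≤ 2 * N + 1) :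
    (rowRun hN c1 c2 r).Nodup := by
  apply List.Nodup.map_on ?_ List.nodup_range
  intro t ht t' ht' he
  simp only [List.mem_range, Nat.dist] at ht ht'
  by_cases h : c1 ≤ c2 <;> simp only [if_pos, if_neg, h, if_true, if_false] at he <;>
    (have := (pt_inj hN (by omega) (by omega) (by omega) (by omega) (by omega) (by omega)).mp he
     omega)

lemma vert_X (hu : u < N) : X (vert hN u) = 4 * u + 1 := X_pt hN (by omega)
lemma vert_Y : Y (vert hN u) = 0 := Y_pt hN (by omega)
lemma vert_Z : Z (vert hN u) = 0 := Z_pt hN (by omega)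

lemma vert_not_arm (hu : u < N) (hi : i < N) (hr : r ≤ 2 * N + 1) :
    vert hN u ∉ armA hN i p r := by
  intro hx
  obtain ⟨h1, h2, hsh⟩ := armA_coords hN hi hr hx
  rw [vert_X hN hu, vert_Y hN, vert_Z hN] at *
  rcases hsh with ⟨hz, -, -, -⟩ | ⟨-, hs⟩
  · omega
  · rcases hs with ⟨-, hX, hY⟩ | ⟨-, hX, hY⟩ | ⟨-, hX, hY⟩ <;> omega

lemma vert_not_row (hu : u < N) (hc1 : c1 < 4 * N) (hc2 : c2 < 4 * N) (hr2 : 2 ≤ r)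
    (hr : r ≤ 2 * N + 1) : vert hN u ∉ rowRun hN c1 c2 r := by
  intro hx
  obtain ⟨-, hy, -, -⟩ := rowRun_coords hN hc1 hc2 hr hx
  rw [vert_Y hN] at hy
  omega

lemma vert_ne_vert (hu : u < N) (hi : i < N) (hui : u ≠ i) : vert hN u ≠ vert hN i :=
  pt_ne hN (by omega) (by omega) (by omega) (by omega) (by omega) (by omega) (by omega)

lemma mem_innerL (hx : x ∈ innerL hN i j p q r) :
    x ∈ armA hN i p r ∨ x ∈ rowRun hN (colOf i p) (colOf j q) r ∨ x ∈ armA hN j q r := by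
  simp only [innerL, List.mem_append, List.mem_reverse] at hx
  tauto

lemma nodup_supp (hi : i < N) (hj : j < N) (hij : i ≠ j) (hr2 : 2 ≤ r) (hrN : r ≤ 2 * N + 1) :
    (vert hN i :: (innerL hN i j p q r ++ [vert hN j])).Nodup := by
  have hci : colOf i p < 4 * N := colOf_lt hi
  have hcj : colOf j q < 4 * N := colOf_lt hj
  rw [List.nodup_cons]
  constructor
  · intro hx
    rw [List.mem_append] at hx
    rcases hx with hx | hx
    · rcases mem_innerL hN hx with h | h | h
      · exact vert_not_arm hN hi hi hrN h
      · exact vert_not_row hN hi hci hcj hr2 hrN h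
      · exact vert_not_arm hN hi hj hrN h
    · simp only [List.mem_singleton] at hx
      exact vert_ne_vert hN hi hj hij hx
  · refine List.Nodup.append ?_ (List.nodup_singleton _) ?_
    · refine List.Nodup.append ?_ (List.nodup_reverse.mpr (nodup_armA hN hj hrN)) ?_
      · refine List.Nodup.append (nodup_armA hN hi hrN) (nodup_rowRun hN hci hcj hrN) ?_
        intro a ha ha'
        exact arm_row hN hi hrN hr2 hrN hci hcj ha ha'
      · intro a ha ha'
        rw [List.mem_reverse] at ha'
        rw [List.mem_append] at ha
        rcases ha with ha | ha
        · exact hij (arm_arm hN hi hj hrN hrN ha ha').1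
        · exact arm_row hN hj hrN hr2 hrN hci hcj ha' ha
    · intro a ha ha'
      simp only [List.mem_singleton] at ha'
      subst ha'
      rcases mem_innerL hN ha with h | h | h
      · exact vert_not_arm hN hj hi hrN h
      · exact vert_not_row hN hj hci hcj hr2 hrN h
      · exact vert_not_arm hN hj hj hrN h

lemma iso_supp (hu : u < N) (hi : i < N) (hj : j < N) (hui : u ≠ i) (huj : u ≠ j)
    (hr2 : 2 ≤ r) (hrN : r ≤ 2 * N + 1)
    (hx : x ∈ vert hN i :: (innerL hN i j p q r ++ [vert hN j])) :
    2 ≤ L1 (vert hN u) x := by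
  have hXu := vert_X hN hu
  have hYu : Y (vert hN u) = 0 := vert_Y hN
  have hZu : Z (vert hN u) = 0 := vert_Z hN
  have harm : ∀ (p' : Fin 4) (a : ℕ), a < N → a ≠ u → x ∈ armA hN a p' r →
      2 ≤ L1 (vert hN u) x := by
    intro p' a ha hau hxa
    obtain ⟨h1, h2, hsh⟩ := armA_coords hN ha hrN hxa
    simp only [L1, Nat.dist, hXu, hYu, hZu]
    rcases hsh with ⟨hz, -, -, -⟩ | ⟨hz, hs⟩
    · omega
    · rcases hs with ⟨-, hX, hY⟩ | ⟨-, hX, hY⟩ | ⟨-, hX, hY⟩ <;> omega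
  have hvert : ∀ a : ℕ, a < N → a ≠ u → x = vert hN a → 2 ≤ L1 (vert hN u) x := by
    intro a ha hau hxa
    subst hxa
    have h1 : X (vert hN a) = 4 * a + 1 := vert_X hN ha
    have h2 : Y (vert hN a) = 0 := vert_Y hN
    have h3 : Z (vert hN a) = 0 := vert_Z hN
    simp only [L1, Nat.dist, hXu, hYu, hZu, h1, h2, h3]
    omega
  rcases List.mem_cons.mp hx with rfl | hx
  · exact hvert i hi (fun h => hui h.symm) rfl
  rcases List.mem_append.mp hx with hx | hx
  · rcases mem_innerL hN hx with h | h | h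
    · exact harm p i hi (fun h => hui h.symm) h
    · obtain ⟨hz, hy, -, -⟩ :=
        rowRun_coords hN (colOf_lt hi) (colOf_lt hj) hrN h
      simp only [L1, Nat.dist, hXu, hYu, hZu]
      omega
    · exact harm q j hj (fun h => huj h.symm) h
  · simp only [List.mem_singleton] at hx
    exact hvert j hj (fun h => huj h.symm) hx

end NodupIso


section Main

variable {V : Type*} [Fintype V] [DecidableEq V]

noncomputable def idxF {N : ℕ} (hcard : Fintype.card V = N) : V → ℕ :=
  fun v => ((Fintype.equivFinOfCardEq hcard) v : ℕ)

lemma idxF_lt {N : ℕ} (hcard : Fintype.card V = N) (v : V) : idxF hcard v < N :=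
  ((Fintype.equivFinOfCardEq hcard) v).isLt

lemma idxF_inj {N : ℕ} (hcard : Fintype.card V = N) {v w : V}
    (h : idxF hcard v = idxF hcard w) : v = w :=
  (Fintype.equivFinOfCardEq hcard).injective (Fin.ext h)

variable (G : SimpleGraph V) [DecidableRel G.Adj]

noncomputable def rowF : Sym2 V → ℕ :=
  fun e => if he : e ∈ G.edgeFinset then 2 + ((Fintype.equivFin G.edgeFinset) ⟨e, he⟩ : ℕ) else 0

lemma rowF_ge {v w : V} (h : G.Adj v w) : 2 ≤ rowF G s(v, w) := by
  simp only [rowF, dif_pos (by rwa [SimpleGraph.mem_edgeFinset, SimpleGraph.mem_edgeSet] :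
    s(v, w) ∈ G.edgeFinset)]
  omega

lemma ecard_le {N : ℕ} (hcard : Fintype.card V = N) (hdeg : ∀ v, G.degree v ≤ 4) :
    G.edgeFinset.card ≤ 2 * N := by
  have h1 : ∑ v : V, G.degree v = 2 * G.edgeFinset.card :=
    SimpleGraph.sum_degrees_eq_twice_card_edges G
  have h2 : ∑ v : V, G.degree v ≤ ∑ _v : V, 4 := Finset.sum_le_sum fun v _ => hdeg v
  simp only [Finset.sum_const, Finset.card_univ, smul_eq_mul, hcard] at h2
  omega

lemma rowF_le {N : ℕ} (hcard : Fintype.card V = N) (hdeg : ∀ v, G.degree v ≤ 4)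
    {v w : V} (h : G.Adj v w) : rowF G s(v, w) ≤ 2 * N + 1 := by
  have hmem : s(v, w) ∈ G.edgeFinset := by
    rwa [SimpleGraph.mem_edgeFinset, SimpleGraph.mem_edgeSet]
  simp only [rowF, dif_pos hmem]
  have h1 : ((Fintype.equivFin G.edgeFinset) ⟨s(v, w), hmem⟩ : ℕ) < Fintype.card G.edgeFinset :=
    Fin.isLt _
  have h2 : Fintype.card G.edgeFinset = G.edgeFinset.card := Fintype.card_coe _
  have := ecard_le G hcard hdeg
  omega

lemma rowF_inj {e e' : Sym2 V} (he : e ∈ G.edgeFinset) (he' : e' ∈ G.edgeFinset)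
    (h : rowF G e = rowF G e') : e = e' := by
  simp only [rowF, dif_pos he, dif_pos he'] at h
  have : (Fintype.equivFin G.edgeFinset) ⟨e, he⟩ = (Fintype.equivFin G.edgeFinset) ⟨e', he'⟩ :=
    Fin.ext (by omega)
  have := (Fintype.equivFin G.edgeFinset).injective this
  exact congrArg Subtype.val this

noncomputable def portF (hdeg : ∀ v, G.degree v ≤ 4) : V → V → Fin 4 :=
  fun v w =>
    if h : w ∈ G.neighborFinset v then
      Fin.castLE (by rw [Fintype.card_coe]; exact hdeg v)
        ((Fintype.equivFin (↥(G.neighborFinset v))) ⟨w, h⟩)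
    else 0

lemma portF_inj (hdeg : ∀ v, G.degree v ≤ 4) {v w w' : V} (h : G.Adj v w) (h' : G.Adj v w')
    (he : portF G hdeg v w = portF G hdeg v w') : w = w' := by
  have hw : w ∈ G.neighborFinset v := by rwa [SimpleGraph.mem_neighborFinset]
  have hw' : w' ∈ G.neighborFinset v := by rwa [SimpleGraph.mem_neighborFinset]
  simp only [portF, dif_pos hw, dif_pos hw'] at he
  have h1 := Fin.castLE_injective _ he
  have h2 := (Fintype.equivFin (↥(G.neighborFinset v))).injective h1
  exact congrArg Subtype.val h2

end Main


section Assemble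

variable {V : Type*} [Fintype V] [DecidableEq V] (G : SimpleGraph V) [DecidableRel G.Adj]
  {N : ℕ}

noncomputable def phiF (hN0 : 0 < N) (hcard : Fintype.card V = N) : V → GP N :=
  fun v => vert hN0 (idxF hcard v)

lemma phiF_inj (hN0 : 0 < N) (hcard : Fintype.card V = N) :
    Function.Injective (phiF (V := V) hN0 hcard) := by
  intro a b h
  have ha := idxF_lt hcard a
  have hb := idxF_lt hcard b
  have := (pt_inj hN0 (by omega) (by omega) (by omega) (by omega) (by omega) (by omega)).mp h
  exact idxF_inj hcard (by omega)

noncomputable def lstF (hN0 : 0 < N) (hcard : Fintype.card V = N)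
    (hdeg : ∀ v, G.degree v ≤ 4) (v w : V) : List (GP N) :=
  innerL hN0 (idxF hcard v) (idxF hcard w) (portF G hdeg v w) (portF G hdeg w v)
    (rowF G s(v, w))

lemma chainF (hN0 : 0 < N) (hcard : Fintype.card V = N) (hdeg : ∀ v, G.degree v ≤ 4)
    {v w : V} (h : G.Adj v w) :
    List.Chain (HG N).Adj (phiF hN0 hcard v)
      (lstF G hN0 hcard hdeg v w ++ [phiF hN0 hcard w]) :=
  chain_supp hN0 (idxF_lt hcard v) (idxF_lt hcard w) (rowF_ge G h) (rowF_le G hcard hdeg h)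

noncomputable def pathF (hN0 : 0 < N) (hcard : Fintype.card V = N)
    (hdeg : ∀ v, G.degree v ≤ 4) {v w : V} (h : G.Adj v w) :
    (HG N).Walk (phiF hN0 hcard v) (phiF hN0 hcard w) :=
  if _ : idxF hcard v < idxF hcard w then
    mkWalk _ _ (lstF G hN0 hcard hdeg v w) (chainF G hN0 hcard hdeg h)
  else
    (mkWalk _ _ (lstF G hN0 hcard hdeg w v) (chainF G hN0 hcard hdeg h.symm)).reverse

lemma interior_concat {α : Type*} (a b : α) (l : List α) :
    (a :: (l ++ [b])).tail.dropLast = l := by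
  simp

lemma interior_rev {α : Type*} (a b : α) (l : List α) :
    (a :: (l ++ [b])).reverse.tail.dropLast = l.reverse := by
  rw [List.reverse_cons, List.reverse_append]
  simp

lemma pathF_interior (hN0 : 0 < N) (hcard : Fintype.card V = N) (hdeg : ∀ v, G.degree v ≤ 4)
    {v w : V} (h : G.Adj v w) {x : GP N}
    (hx : x ∈ (pathF G hN0 hcard hdeg h).support.tail.dropLast) :
    ∃ a b : V, s(a, b) = s(v, w) ∧ G.Adj a b ∧ x ∈ lstF G hN0 hcard hdeg a b := by
  rw [pathF] at hx
  split_ifs at hx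
  · rw [mkWalk_support, interior_concat] at hx
    exact ⟨v, w, rfl, h, hx⟩
  · rw [SimpleGraph.Walk.support_reverse, mkWalk_support, interior_rev,
      List.mem_reverse] at hx
    exact ⟨w, v, Sym2.eq_swap, h.symm, hx⟩

lemma lst_overlap (hN0 : 0 < N) (hcard : Fintype.card V = N) (hdeg : ∀ v, G.degree v ≤ 4)
    {v w v' w' : V} (h : G.Adj v w) (h' : G.Adj v' w') {x : GP N}
    (hx : x ∈ lstF G hN0 hcard hdeg v w) (hx' : x ∈ lstF G hN0 hcard hdeg v' w') :
    s(v, w) = s(v', w') := by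
  have harm : ∀ a b a' b' : V, G.Adj a b → G.Adj a' b' →
      x ∈ armA hN0 (idxF hcard a) (portF G hdeg a b) (rowF G s(a, b)) →
      x ∈ armA hN0 (idxF hcard a') (portF G hdeg a' b') (rowF G s(a', b')) →
      s(a, b) = s(a', b') := by
    intro a b a' b' hab hab' h1 h2
    obtain ⟨hii, hpp⟩ := arm_arm hN0 (idxF_lt hcard a) (idxF_lt hcard a')
      (rowF_le G hcard hdeg hab) (rowF_le G hcard hdeg hab') h1 h2
    have haa : a = a' := idxF_inj hcard hii
    subst haa
    have hbb : b = b' := portF_inj G hdeg hab hab' hpp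
    subst hbb
    rfl
  have hrowmem : ∀ a b : V, G.Adj a b → s(a, b) ∈ G.edgeFinset := by
    intro a b hab
    rwa [SimpleGraph.mem_edgeFinset, SimpleGraph.mem_edgeSet]
  have hsw : (s(w, v) : Sym2 V) = s(v, w) := Sym2.eq_swap
  have hsw' : (s(w', v') : Sym2 V) = s(v', w') := Sym2.eq_swap
  have harow : ∀ a b a' b' : V, G.Adj a b → G.Adj a' b' →
      x ∈ armA hN0 (idxF hcard a) (portF G hdeg a b) (rowF G s(a, b)) →
      x ∈ rowRun hN0 (colOf (idxF hcard a') (portF G hdeg a' b'))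
        (colOf (idxF hcard b') (portF G hdeg b' a')) (rowF G s(a', b')) → False := by
    intro a b a' b' hab hab' h1 h2
    exact arm_row hN0 (idxF_lt hcard a) (rowF_le G hcard hdeg hab) (rowF_ge G hab')
      (rowF_le G hcard hdeg hab') (colOf_lt (idxF_lt hcard a')) (colOf_lt (idxF_lt hcard b'))
      h1 h2
  rcases mem_innerL hN0 hx with h1 | h1 | h1 <;> rcases mem_innerL hN0 hx' with h2 | h2 | h2
  · exact harm v w v' w' h h' h1 h2
  · exact (harow v w v' w' h h' h1 h2).elim
  · rw [← hsw']; rw [← hsw'] at h2; exact harm v w w' v' h h'.symm h1 h2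
  · exact (harow v' w' v w h' h h2 h1).elim
  · have := row_row hN0 (colOf_lt (idxF_lt hcard v)) (colOf_lt (idxF_lt hcard w))
      (colOf_lt (idxF_lt hcard v')) (colOf_lt (idxF_lt hcard w'))
      (rowF_le G hcard hdeg h) (rowF_le G hcard hdeg h') h1 h2
    exact rowF_inj G (hrowmem v w h) (hrowmem v' w' h') this
  · rw [← hsw'] at h2; exact (harow w' v' v w h'.symm h h2 h1).elim
  · rw [← hsw]; rw [← hsw] at h1; exact harm w v v' w' h.symm h' h1 h2
  · rw [← hsw] at h1; exact (harow w v v' w' h.symm h' h1 h2).elim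
  · rw [← hsw, ← hsw']; rw [← hsw] at h1; rw [← hsw'] at h2
    exact harm w v w' v' h.symm h'.symm h1 h2

end Assemble


section Final

variable {V : Type*} [Fintype V] [DecidableEq V] (G : SimpleGraph V) [DecidableRel G.Adj]
  {N : ℕ}

noncomputable def mainEmb (hN0 : 0 < N) (hcard : Fintype.card V = N)
    (hdeg : ∀ v, G.degree v ≤ 4) : VIEDEmbedding G (HG N) where
  toFun := phiF hN0 hcard
  inj := phiF_inj hN0 hcard
  path := fun _ _ h => pathF G hN0 hcard hdeg h
  path_isPath := by
    intro v w h
    have hne : idxF hcard v ≠ idxF hcard w := fun he => h.ne (idxF_inj hcard he)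
    unfold pathF
    split_ifs
    · rw [SimpleGraph.Walk.isPath_def, mkWalk_support]
      exact nodup_supp hN0 (idxF_lt hcard v) (idxF_lt hcard w) hne (rowF_ge G h)
        (rowF_le G hcard hdeg h)
    · apply SimpleGraph.Walk.IsPath.reverse
      rw [SimpleGraph.Walk.isPath_def, mkWalk_support]
      exact nodup_supp hN0 (idxF_lt hcard w) (idxF_lt hcard v) (Ne.symm hne) (rowF_ge G h.symm)
        (rowF_le G hcard hdeg h.symm)
  path_symm := by
    intro v w h
    have hne : idxF hcard v ≠ idxF hcard w := fun he => h.ne (idxF_inj hcard he)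
    unfold pathF
    rcases Nat.lt_or_ge (idxF hcard v) (idxF hcard w) with hlt | hge
    · rw [dif_neg (by omega), dif_pos hlt]
    · rw [dif_pos (by omega), dif_neg (by omega), SimpleGraph.Walk.reverse_reverse]
  interior_disjoint := by
    intro v w v' w' h h' hne x hx hx'
    obtain ⟨a, b, hab, hadj, hmem⟩ := pathF_interior G hN0 hcard hdeg h hx
    obtain ⟨a', b', hab', hadj', hmem'⟩ := pathF_interior G hN0 hcard hdeg h' hx'
    exact hne (by rw [← hab, ← hab']
                  exact lst_overlap G hN0 hcard hdeg hadj hadj' hmem hmem')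
  vertex_isolated := by
    intro u v w h huv huw x hx
    have hu : idxF hcard u < N := idxF_lt hcard u
    have h2 : 2 ≤ L1 (vert hN0 (idxF hcard u)) x := by
      unfold pathF at hx
      split_ifs at hx
      · rw [mkWalk_support] at hx
        exact iso_supp hN0 hu (idxF_lt hcard v) (idxF_lt hcard w)
          (fun he => huv (idxF_inj hcard he)) (fun he => huw (idxF_inj hcard he)) (rowF_ge G h)
          (rowF_le G hcard hdeg h) hx
      · rw [SimpleGraph.Walk.support_reverse, List.mem_reverse, mkWalk_support] at hx
        exact iso_supp hN0 hu (idxF_lt hcard w) (idxF_lt hcard v)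
          (fun he => huw (idxF_inj hcard he)) (fun he => huv (idxF_inj hcard he))
          (rowF_ge G h.symm) (rowF_le G hcard hdeg h.symm) hx
    exact two_le_dist hN0 h2

end Final

end VIED

theorem stmt_7 {V : Type*} [Fintype V] [DecidableEq V]
    (G : SimpleGraph V) [DecidableRel G.Adj]
    (N : ℕ) (hN : N = Fintype.card V) (hN1 : 1 ≤ N)
    (hdeg : ∀ v, G.degree v ≤ 4) :
    Nonempty (VIEDEmbedding G (gridGraph ![4 * N, 2 * N + 2, 2])) :=
  ⟨VIED.mainEmb G hN1 hN.symm hdeg⟩
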